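/- (Serial optimal sampling parameters.) Let κ_i > 0, ρ ∈ (0,1), κ̃_i = 1 + κ_i/ρ², μ_g, μ_i > 0, ‖A_i‖² = κ_i μ_g μ_i, and n ≥ 2. Define the probabilities p_i = (1 + √κ̃_i)/(n + Σ_{j=1}^n √κ̃_j). Then Σ_{i=1}^n p_i = 1, and the rate θ_opt = 1 − 2/(n + Σ_{j=1}^n √κ̃_j) together with the step sizes σ_i = μ_i^{-1}/(√κ̃_i − 1) and τ = μ_g^{-1}/(n − 2 + Σ_{j=1}^n √κ̃_j) satisfies θ_opt (1 + √κ̃_i) = 1 + √κ̃_i − 2 p_i for all i, as well as the serial-sampling step size conditions: θ_opt ≥ 1/(1 + 2 τ μ_g), θ_opt ≥ max_i ( 1 − 2 σ_i μ_i p_i / (1 + 2 σ_i μ_i) ), and max_i τ σ_i ‖A_i‖² θ_opt ≤ ρ² p_i. -/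

import Mathlib

/-- Serial optimal sampling parameters.
With condition numbers `κ_i > 0`, `κ̃_i = 1 + κ_i/ρ²`, `‖A_i‖² = κ_i μ_g μ_i`, `n ≥ 2`,
and probabilities `p_i = (1 + √κ̃_i)/(n + Σ_j √κ̃_j)`:  `Σ_i p_i = 1`, and the rate
`θ_opt = 1 − 2/(n + Σ_j √κ̃_j)` with step sizes `σ_i = μ_i⁻¹/(√κ̃_i − 1)`,
`τ = μ_g⁻¹/(n − 2 + Σ_j √κ̃_j)` satisfies `θ_opt (1+√κ̃_i) = 1 + √κ̃_i − 2 p_i` for all `i`,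
as well as `θ_opt ≥ 1/(1 + 2 τ μ_g)`,
`θ_opt ≥ max_i (1 − 2 σ_i μ_i p_i/(1 + 2 σ_i μ_i))`, and
`max_i τ σ_i ‖A_i‖² θ_opt ≤ ρ² p_i`. -/
theorem spdhg_serial_optimal_parameters {n : ℕ} (hn : 2 ≤ n)
    (κ μ normA : Fin n → ℝ) (μg ρ : ℝ)
    (hκ : ∀ i, 0 < κ i) (hρ : ρ ∈ Set.Ioo (0 : ℝ) 1) (hμg : 0 < μg) (hμ : ∀ i, 0 < μ i)
    (hA : ∀ i, normA i ^ 2 = κ i * μg * μ i) :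
    let sqκ : Fin n → ℝ := fun j => Real.sqrt (1 + κ j / ρ ^ 2)
    let sumκ : ℝ := ∑ j, sqκ j
    let p : Fin n → ℝ := fun i => (1 + sqκ i) / ((n : ℝ) + sumκ)
    let θopt : ℝ := 1 - 2 / ((n : ℝ) + sumκ)
    let σ : Fin n → ℝ := fun i => (μ i)⁻¹ / (sqκ i - 1)
    let τ : ℝ := μg⁻¹ / ((n : ℝ) - 2 + sumκ)
    (∑ i, p i = 1) ∧
    (∀ i, θopt * (1 + sqκ i) = 1 + sqκ i - 2 * p i) ∧
    (1 / (1 + 2 * τ * μg) ≤ θopt) ∧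
    (∀ i, 1 - 2 * σ i * μ i * p i / (1 + 2 * σ i * μ i) ≤ θopt) ∧
    (∀ i, τ * σ i * normA i ^ 2 * θopt ≤ ρ ^ 2 * p i) := by
  intro sqκ sumκ p θopt σ τ
  have hρ0 := hρ.1
  have hs : ∀ i, 1 < sqκ i := by
    intro i
    have h1 : (1:ℝ) < 1 + κ i / ρ ^ 2 := by
      have : 0 < κ i / ρ ^ 2 := div_pos (hκ i) (pow_pos hρ0 2)
      linarith
    calc (1:ℝ) = Real.sqrt 1 := Real.sqrt_one.symm
      _ < sqκ i := Real.sqrt_lt_sqrt (by norm_num) h1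
  have hssq : ∀ i, sqκ i ^ 2 = 1 + κ i / ρ ^ 2 := fun i =>
    Real.sq_sqrt (by have h1 := hκ i; positivity)
  have hS : (n:ℝ) ≤ sumκ := by
    calc (n:ℝ) = ∑ _j : Fin n, (1:ℝ) := by simp
      _ ≤ sumκ := Finset.sum_le_sum fun j _ => (hs j).le
  have hn2 : (2:ℝ) ≤ (n:ℝ) := by exact_mod_cast hn
  have hD : 0 < (n:ℝ) + sumκ := by linarith
  have hE : 0 < (n:ℝ) - 2 + sumκ := by linarith
  refine ⟨?_, ?_, ?_, ?_, ?_⟩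
  · show ∑ i, (1 + sqκ i) / ((n : ℝ) + sumκ) = 1
    rw [← Finset.sum_div, div_eq_one_iff_eq hD.ne', Finset.sum_add_distrib]
    simp [sumκ]
  · intro i
    show (1 - 2 / ((n : ℝ) + sumκ)) * (1 + sqκ i)
        = 1 + sqκ i - 2 * ((1 + sqκ i) / ((n : ℝ) + sumκ))
    field_simp
  · have h : 1 / (1 + 2 * τ * μg) = θopt := by
      show 1 / (1 + 2 * (μg⁻¹ / ((n : ℝ) - 2 + sumκ)) * μg) = 1 - 2 / ((n : ℝ) + sumκ)
      rw [show 2 * (μg⁻¹ / ((n : ℝ) - 2 + sumκ)) * μg = 2 / ((n : ℝ) - 2 + sumκ) by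
        field_simp]
      rw [show (1:ℝ) + 2 / ((n : ℝ) - 2 + sumκ)
          = ((n : ℝ) + sumκ) / ((n : ℝ) - 2 + sumκ) by field_simp; ring]
      rw [one_div_div]
      field_simp
      ring
    exact h.le
  · intro i
    have hsi := hs i
    have h : 1 - 2 * σ i * μ i * p i / (1 + 2 * σ i * μ i) = θopt := by
      show 1 - 2 * ((μ i)⁻¹ / (sqκ i - 1)) * μ i * ((1 + sqκ i) / ((n : ℝ) + sumκ)) /
          (1 + 2 * ((μ i)⁻¹ / (sqκ i - 1)) * μ i) = 1 - 2 / ((n : ℝ) + sumκ)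
      have hμi := hμ i
      have hs1 : sqκ i - 1 ≠ 0 := sub_ne_zero_of_ne hsi.ne'
      have h1 : (μ i)⁻¹ / (sqκ i - 1) * μ i = 1 / (sqκ i - 1) := by
        field_simp
      rw [show 2 * ((μ i)⁻¹ / (sqκ i - 1)) * μ i = 2 * ((μ i)⁻¹ / (sqκ i - 1) * μ i) by ring,
        h1]
      rw [show (1:ℝ) + 2 * (1 / (sqκ i - 1)) = (sqκ i + 1) / (sqκ i - 1) by
        field_simp; ring]
      have hs1' : sqκ i + 1 ≠ 0 := by positivity
      field_simp
      ring
    exact h.le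
  · intro i
    have hsi := hs i
    have hκi : κ i = (sqκ i ^ 2 - 1) * ρ ^ 2 := by
      have := hssq i
      field_simp at this ⊢
      linarith
    have h : τ * σ i * normA i ^ 2 * θopt = ρ ^ 2 * p i := by
      show (μg⁻¹ / ((n : ℝ) - 2 + sumκ)) * ((μ i)⁻¹ / (sqκ i - 1)) * normA i ^ 2 *
          (1 - 2 / ((n : ℝ) + sumκ)) = ρ ^ 2 * ((1 + sqκ i) / ((n : ℝ) + sumκ))
      rw [hA i, hκi]
      have hμi := hμ i
      have hs1 : sqκ i - 1 ≠ 0 := sub_ne_zero_of_ne hsi.ne'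
      field_simp [hE.ne', hD.ne', hμg.ne', hμi.ne', hs1]
      ring
    exact h.le
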